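/- Let X be the full 2-simplex on vertex set {1,2,3} and let N ⊴ A be a normal subsystem such that every connecting map α^σ_τ: N_σ → N_τ (σ⊆τ) is an isomorphism. Then H^1(X,N) is trivial and the natural map H^1(X,A) → H^1(X,A/N) is a bijection. -/
import Mathlib


/-- The coboundary map `d₁ : C¹ → C²`. -/
def d1 {A : Finset ℕ → Type*} [∀ σ, Group (A σ)]
    (α : ∀ σ τ : Finset ℕ, σ ⊆ τ → (A σ →* A τ))
    (b : ∀ i j : ℕ, A {i, j}) (i j k : ℕ) : A {i, j, k} :=
  α {j, k} {i, j, k} (by simp [Finset.insert_subset_iff]) ((b j k)⁻¹) *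
    α {i, k} {i, j, k} (by simp [Finset.insert_subset_iff]) (b i k) *
    α {i, j} {i, j, k} (by simp [Finset.insert_subset_iff]) ((b i j)⁻¹)

/-- The right action of `C⁰` on `C¹`. -/
def act {A : Finset ℕ → Type*} [∀ σ, Group (A σ)]
    (α : ∀ σ τ : Finset ℕ, σ ⊆ τ → (A σ →* A τ))
    (b : ∀ i j : ℕ, A {i, j}) (a : ∀ i : ℕ, A {i}) (i j : ℕ) : A {i, j} :=
  α {j} {i, j} (by simp) ((a j)⁻¹) * b i j * α {i} {i, j} (by simp) (a i)

/-- The full 2-simplex on the vertex set `{1,2,3}`: all nonempty subsets. -/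
def TriangleComplex : Set (Finset ℕ) :=
  {σ | σ.Nonempty ∧ σ ⊆ ({1, 2, 3} : Finset ℕ)}

section
variable {A : Finset ℕ → Type*} [∀ σ, Group (A σ)]
variable (S : Set (Finset ℕ)) (α : ∀ σ τ : Finset ℕ, σ ⊆ τ → (A σ →* A τ))
variable (N : ∀ σ, Subgroup (A σ))

/-- `z ∈ Z¹(X,𝒜)`. -/
def IsCocycle (z : ∀ i j : ℕ, A {i, j}) : Prop :=
  ∀ i j k : ℕ, i < j → j < k → ({i, j, k} : Finset ℕ) ∈ S → d1 α z i j k = 1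

/-- an element of `C¹(𝒩)`. -/
def InN1 (z : ∀ i j : ℕ, A {i, j}) : Prop :=
  ∀ i j : ℕ, i < j → ({i, j} : Finset ℕ) ∈ S → z i j ∈ N {i, j}

/-- an element of `C⁰(𝒩)`. -/
def InN0 (m : ∀ i : ℕ, A {i}) : Prop :=
  ∀ i : ℕ, ({i} : Finset ℕ) ∈ S → m i ∈ N {i}

end

lemma memTC_of {σ : Finset ℕ} (h1 : σ.Nonempty) (h2 : σ ⊆ {1,2,3}) :
    σ ∈ TriangleComplex := ⟨h1, h2⟩

lemma memT1 : ({1} : Finset ℕ) ∈ TriangleComplex := memTC_of (by decide) (by decide)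
lemma memT2 : ({2} : Finset ℕ) ∈ TriangleComplex := memTC_of (by decide) (by decide)
lemma memT3 : ({3} : Finset ℕ) ∈ TriangleComplex := memTC_of (by decide) (by decide)
lemma memT12 : ({1,2} : Finset ℕ) ∈ TriangleComplex := memTC_of (by decide) (by decide)
lemma memT13 : ({1,3} : Finset ℕ) ∈ TriangleComplex := memTC_of (by decide) (by decide)
lemma memT23 : ({2,3} : Finset ℕ) ∈ TriangleComplex := memTC_of (by decide) (by decide)
lemma memT123 : ({1,2,3} : Finset ℕ) ∈ TriangleComplex := memTC_of (by decide) (by decide)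

lemma edge_cases {i j : ℕ} (hij : i < j) (h : ({i, j} : Finset ℕ) ∈ TriangleComplex) :
    (i = 1 ∧ j = 2) ∨ (i = 1 ∧ j = 3) ∨ (i = 2 ∧ j = 3) := by
  have hi : i ∈ ({1,2,3} : Finset ℕ) := h.2 (by simp)
  have hj : j ∈ ({1,2,3} : Finset ℕ) := h.2 (by simp)
  simp only [Finset.mem_insert, Finset.mem_singleton] at hi hj
  omega

lemma tri_cases {i j k : ℕ} (hij : i < j) (hjk : j < k)
    (h : ({i, j, k} : Finset ℕ) ∈ TriangleComplex) : i = 1 ∧ j = 2 ∧ k = 3 := by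
  have hi : i ∈ ({1,2,3} : Finset ℕ) := h.2 (by simp)
  have hj : j ∈ ({1,2,3} : Finset ℕ) := h.2 (by simp)
  have hk : k ∈ ({1,2,3} : Finset ℕ) := h.2 (by simp)
  simp only [Finset.mem_insert, Finset.mem_singleton] at hi hj hk
  omega


/-- let `X` be the full 2-simplex on `{1,2,3}` and `𝒩 ⊴ 𝒜` a normal
subsystem all of whose connecting maps `α^σ_τ : N_σ → N_τ` are isomorphisms.
Then `H¹(X,𝒩)` is trivial and the natural map `H¹(X,𝒜) → H¹(X,𝒜/𝒩)` is a
bijection, classes of the quotient system being represented by lifts in `𝒜`. -/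
theorem H1_eq_H1_quotient_of_iso_normal_subsystem
    (A : Finset ℕ → Type*) [∀ σ, Group (A σ)]
    (α : ∀ σ τ : Finset ℕ, σ ⊆ τ → (A σ →* A τ))
    (hcomp : ∀ (σ ρ τ : Finset ℕ) (h1 : σ ⊆ ρ) (h2 : ρ ⊆ τ),
      σ ∈ TriangleComplex → ρ ∈ TriangleComplex → τ ∈ TriangleComplex →
      ∀ x : A σ, α σ τ (h1.trans h2) x = α ρ τ h2 (α σ ρ h1 x))
    (N : ∀ σ, Subgroup (A σ)) (hnormal : ∀ σ, (N σ).Normal)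
    (hiso : ∀ (σ τ : Finset ℕ) (h : σ ⊆ τ),
      σ ∈ TriangleComplex → τ ∈ TriangleComplex →
      Set.BijOn (α σ τ h) (N σ : Set (A σ)) (N τ : Set (A τ))) :
    -- `H¹(X,𝒩) = 0`: every 𝒩-valued cocycle is a coboundary of `C⁰(𝒩)`
    (∀ n : ∀ i j : ℕ, A {i, j},
      InN1 TriangleComplex N n → IsCocycle TriangleComplex α n →
      ∃ m : ∀ i : ℕ, A {i}, InN0 TriangleComplex N m ∧
        ∀ i j : ℕ, i < j → ({i, j} : Finset ℕ) ∈ TriangleComplex →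
          n i j = act α (fun _ _ => 1) m i j) ∧
    -- `κ₁ : H¹(X,𝒜) → H¹(X,𝒜/𝒩)` is surjective
    (∀ z : ∀ i j : ℕ, A {i, j},
      (∀ i j k : ℕ, i < j → j < k → ({i, j, k} : Finset ℕ) ∈ TriangleComplex →
        d1 α z i j k ∈ N {i, j, k}) →
      ∃ z' : ∀ i j : ℕ, A {i, j}, IsCocycle TriangleComplex α z' ∧
        ∀ i j : ℕ, i < j → ({i, j} : Finset ℕ) ∈ TriangleComplex →
          (z i j)⁻¹ * z' i j ∈ N {i, j}) ∧
    -- `κ₁ : H¹(X,𝒜) → H¹(X,𝒜/𝒩)` is injective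
    (∀ z z' : ∀ i j : ℕ, A {i, j},
      IsCocycle TriangleComplex α z → IsCocycle TriangleComplex α z' →
      (∃ b : ∀ i : ℕ, A {i},
        ∀ i j : ℕ, i < j → ({i, j} : Finset ℕ) ∈ TriangleComplex →
          (act α z b i j)⁻¹ * z' i j ∈ N {i, j}) →
      ∃ b : ∀ i : ℕ, A {i},
        ∀ i j : ℕ, i < j → ({i, j} : Finset ℕ) ∈ TriangleComplex →
          z' i j = act α z b i j) := by
  -- composition push lemmas
  have p2_12 : ∀ x : A {2}, α {2} {1,2,3} (by decide) x
      = α {1,2} {1,2,3} (by decide) (α {2} {1,2} (by decide) x) :=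
    hcomp {2} {1,2} {1,2,3} (by decide) (by decide) memT2 memT12 memT123
  have p2_23 : ∀ x : A {2}, α {2} {1,2,3} (by decide) x
      = α {2,3} {1,2,3} (by decide) (α {2} {2,3} (by decide) x) :=
    hcomp {2} {2,3} {1,2,3} (by decide) (by decide) memT2 memT23 memT123
  have p3_13 : ∀ x : A {3}, α {3} {1,2,3} (by decide) x
      = α {1,3} {1,2,3} (by decide) (α {3} {1,3} (by decide) x) :=
    hcomp {3} {1,3} {1,2,3} (by decide) (by decide) memT3 memT13 memT123
  have p3_23 : ∀ x : A {3}, α {3} {1,2,3} (by decide) x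
      = α {2,3} {1,2,3} (by decide) (α {3} {2,3} (by decide) x) :=
    hcomp {3} {2,3} {1,2,3} (by decide) (by decide) memT3 memT23 memT123
  have p1_12 : ∀ x : A {1}, α {1} {1,2,3} (by decide) x
      = α {1,2} {1,2,3} (by decide) (α {1} {1,2} (by decide) x) :=
    hcomp {1} {1,2} {1,2,3} (by decide) (by decide) memT1 memT12 memT123
  have p1_13 : ∀ x : A {1}, α {1} {1,2,3} (by decide) x
      = α {1,3} {1,2,3} (by decide) (α {1} {1,3} (by decide) x) :=
    hcomp {1} {1,3} {1,2,3} (by decide) (by decide) memT1 memT13 memT123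
  refine ⟨?_, ?_, ?_⟩
  · -- Part 1: H¹(X,N) trivial
    intro n hN hZ
    have hNe12 := hN 1 2 (by norm_num) memT12
    have hNe13 := hN 1 3 (by norm_num) memT13
    have hNe23 := hN 2 3 (by norm_num) memT23
    have hco := hZ 1 2 3 (by norm_num) (by norm_num) memT123
    simp only [d1] at hco
    obtain ⟨m2, hm2N, hm2⟩ := (hiso {2} {1,2} (by decide) memT2 memT12).2.2
      (inv_mem hNe12 : (n 1 2)⁻¹ ∈ N {1,2})
    obtain ⟨m3, hm3N, hm3⟩ := (hiso {3} {1,3} (by decide) memT3 memT13).2.2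
      (inv_mem hNe13 : (n 1 3)⁻¹ ∈ N {1,3})
    let m : ∀ i : ℕ, A {i} := fun i => match i with | 2 => m2 | 3 => m3 | _ => 1
    have e1 : m 1 = 1 := rfl
    have e2 : m 2 = m2 := rfl
    have e3 : m 3 = m3 := rfl
    refine ⟨m, ?_, ?_⟩
    · intro i hi
      have hi' : i ∈ ({1,2,3} : Finset ℕ) := hi.2 (by simp)
      simp only [Finset.mem_insert, Finset.mem_singleton] at hi'
      rcases hi' with rfl | rfl | rfl
      · exact one_mem _
      · exact hm2N
      · exact hm3N
    · intro i j hij hmem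
      rcases edge_cases hij hmem with ⟨rfl, rfl⟩ | ⟨rfl, rfl⟩ | ⟨rfl, rfl⟩
      · simp only [act, e1, e2, map_one, map_inv, mul_one, one_mul, hm2, inv_inv]
      · simp only [act, e1, e3, map_one, map_inv, mul_one, one_mul, hm3, inv_inv]
      · -- edge (2,3): use injectivity into the triangle
        have h23mem : α {3} {2,3} (by decide) (m 3) ∈ N {2,3} :=
          (hiso {3} {2,3} (by decide) memT3 memT23).1 hm3N
        have h22mem : α {2} {2,3} (by decide) (m 2) ∈ N {2,3} :=
          (hiso {2} {2,3} (by decide) memT2 memT23).1 hm2N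
        have hrhsN : act α (fun _ _ => (1 : A _)) m 2 3 ∈ N {2, 3} := by
          simp only [act, map_inv, map_one, mul_one]
          exact mul_mem (inv_mem h23mem) h22mem
        apply (hiso {2,3} {1,2,3} (by decide) memT23 memT123).2.1 hNe23 hrhsN
        simp only [act, e2, e3, map_mul, map_inv, map_one, mul_one, one_mul]
        rw [← p3_23, ← p2_23, p3_13, p2_12, hm2, hm3]
        simp only [map_inv, inv_inv] at hco ⊢
        rw [mul_assoc, inv_mul_eq_one] at hco
        rw [hco]
  · -- Part 2: surjectivity
    intro z hz
    have hcoN := hz 1 2 3 (by norm_num) (by norm_num) memT123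
    obtain ⟨c', hc'N, hc'⟩ := (hiso {2,3} {1,2,3} (by decide) memT23 memT123).2.2 hcoN
    let z' : ∀ i j : ℕ, A {i, j} := fun i j =>
      match i, j with
      | 2, 3 => z 2 3 * c'
      | a, b => z a b
    have e12 : z' 1 2 = z 1 2 := rfl
    have e13 : z' 1 3 = z 1 3 := rfl
    have e23 : z' 2 3 = z 2 3 * c' := rfl
    refine ⟨z', ?_, ?_⟩
    · intro i j k hij hjk hmem
      obtain ⟨rfl, rfl, rfl⟩ := tri_cases hij hjk hmem
      simp only [d1, e12, e13, e23] at hc' ⊢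
      simp only [d1, map_mul, map_inv] at hc' ⊢
      rw [hc']
      group
    · intro i j hij hmem
      rcases edge_cases hij hmem with ⟨rfl, rfl⟩ | ⟨rfl, rfl⟩ | ⟨rfl, rfl⟩
      · rw [e12]; simpa using one_mem _
      · rw [e13]; simpa using one_mem _
      · rw [e23, inv_mul_cancel_left]; exact hc'N
  · -- Part 3: injectivity
    rintro z z' hzc hz'c ⟨b, hb⟩
    -- cocycle identities pushed to the triangle
    have h0 := hzc 1 2 3 (by norm_num) (by norm_num) memT123
    simp only [d1, map_inv] at h0
    rw [mul_assoc, inv_mul_eq_one] at h0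
    have h0' := hz'c 1 2 3 (by norm_num) (by norm_num) memT123
    simp only [d1, map_inv] at h0'
    rw [mul_assoc, inv_mul_eq_one] at h0'
    -- construct m2, m3
    obtain ⟨m2, hm2N, hm2⟩ := (hiso {2} {1,2} (by decide) memT2 memT12).2.2
      ((hnormal {1,2}).conj_mem _ (inv_mem (hb 1 2 (by norm_num) memT12)) (act α z b 1 2))
    obtain ⟨m3, hm3N, hm3⟩ := (hiso {3} {1,3} (by decide) memT3 memT13).2.2
      ((hnormal {1,3}).conj_mem _ (inv_mem (hb 1 3 (by norm_num) memT13)) (act α z b 1 3))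
    have hz'12 : z' 1 2 = (α {2} {1,2} (by decide) m2)⁻¹ * act α z b 1 2 := by
      rw [hm2]; group
    have hz'13 : z' 1 3 = (α {3} {1,3} (by decide) m3)⁻¹ * act α z b 1 3 := by
      rw [hm3]; group
    let b' : ∀ i : ℕ, A {i} := fun i =>
      match i with
      | 2 => b 2 * m2
      | 3 => b 3 * m3
      | i => b i
    have f1 : b' 1 = b 1 := rfl
    have f2 : b' 2 = b 2 * m2 := rfl
    have f3 : b' 3 = b 3 * m3 := rfl
    refine ⟨b', ?_⟩
    intro i j hij hmem
    rcases edge_cases hij hmem with ⟨rfl, rfl⟩ | ⟨rfl, rfl⟩ | ⟨rfl, rfl⟩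
    · rw [hz'12]
      simp only [act, f1, f2, map_mul, map_inv, mul_inv_rev]
      group
    · rw [hz'13]
      simp only [act, f1, f3, map_mul, map_inv, mul_inv_rev]
      group
    · -- edge (2,3)
      have hm3N23 : α {3} {2,3} (by decide) m3 ∈ N {2,3} :=
        (hiso {3} {2,3} (by decide) memT3 memT23).1 hm3N
      have hm2N23 : α {2} {2,3} (by decide) m2 ∈ N {2,3} :=
        (hiso {2} {2,3} (by decide) memT2 memT23).1 hm2N
      have hE : (act α z b 2 3)⁻¹ * act α z b' 2 3 =
          (act α z b 2 3)⁻¹ * (α {3} {2,3} (by decide) m3)⁻¹ * act α z b 2 3 *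
            α {2} {2,3} (by decide) m2 := by
        simp only [act, f2, f3, map_mul, map_inv, mul_inv_rev]
        group
      have hEmem : (act α z b 2 3)⁻¹ * act α z b' 2 3 ∈ N {2,3} := by
        rw [hE]
        exact mul_mem ((hnormal {2,3}).conj_mem' _ (inv_mem hm3N23) _) hm2N23
      have key : (act α z b 2 3)⁻¹ * z' 2 3 = (act α z b 2 3)⁻¹ * act α z b' 2 3 := by
        apply (hiso {2,3} {1,2,3} (by decide) memT23 memT123).2.1
          (hb 2 3 (by norm_num) memT23) hEmem
        rw [hE]
        simp only [act, map_mul, map_inv, mul_inv_rev]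
        rw [h0', hz'12, hz'13]
        simp only [act, map_mul, map_inv, mul_inv_rev]
        simp only [← p3_23, ← p2_23, ← p2_12, ← p3_13, ← p1_12, ← p1_13]
        rw [h0]
        group
      have := mul_left_cancel key
      exact this
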